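/- Let P be a symmetric positive definite solution of the ARE, set A₋ = A − BR⁻¹BᵀP, and assume there are M ≥ 1 and ν > 0 with ‖exp(tA₋)‖ ≤ M e^{−νt} for all t ≥ 0. Fix z₀ ∈ ℝⁿ. Then: (a) the pair z_f(t) = exp(tA₋) z₀, v_f(t) = −R⁻¹BᵀP z_f(t) satisfies ż_f = A z_f + B v_f, z_f(0) = z₀, z_f(t) → 0 as t → ∞, and ½∫₀^∞ (‖z_f(t)‖²_Q + ‖v_f(t)‖²_R) dt = ½⟨P z₀, z₀⟩; (b) every pair (z, v) with z differentiable, v continuous, ż = Az + Bv, z(0) = z₀, z(t) → 0 as t → ∞ and t ↦ ‖z(t)‖²_Q + ‖v(t)‖²_R integrable on [0, ∞) satisfies ½∫₀^∞ (‖z(t)‖²_Q + ‖v(t)‖²_R) dt ≥ ½⟨P z₀, z₀⟩. -/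

import Mathlib

open Matrix MeasureTheory

section Helpers

variable {n m : ℕ}

private lemma dp_swap' (M : Matrix (Fin n) (Fin m) ℝ) (y : Fin m → ℝ) (z : Fin n → ℝ) :
    M.mulVec y ⬝ᵥ z = y ⬝ᵥ Mᵀ.mulVec z := by
  rw [dotProduct_comm, dotProduct_mulVec, ← transpose_transpose M, vecMul_transpose,
    transpose_transpose, dotProduct_comm]

private lemma cont_mulVec' (M : Matrix (Fin n) (Fin m) ℝ) :
    Continuous fun y : Fin m → ℝ => M.mulVec y := by
  refine continuous_pi fun i => ?_
  simpa [Matrix.mulVec, dotProduct] using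
    (continuous_finset_sum Finset.univ fun j _ => (continuous_const.mul (continuous_apply j)))

private lemma cont_quad' (P : Matrix (Fin n) (Fin n) ℝ) :
    Continuous fun y : Fin n → ℝ => P.mulVec y ⬝ᵥ y := by
  simp only [Matrix.mulVec, dotProduct]
  exact continuous_finset_sum _ fun i _ =>
    (continuous_finset_sum _ fun j _ => (continuous_const.mul (continuous_apply j))).mul
      (continuous_apply i)

private lemma quad_nonneg' {k : ℕ} {M : Matrix (Fin k) (Fin k) ℝ} (h : M.PosSemidef)
    (x : Fin k → ℝ) : 0 ≤ M.mulVec x ⬝ᵥ x := by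
  have := h.dotProduct_mulVec_nonneg x
  rw [dotProduct_comm]
  simpa using this

private lemma hasDeriv_quad' (P : Matrix (Fin n) (Fin n) ℝ) {z : ℝ → Fin n → ℝ}
    {d : Fin n → ℝ} {s : Set ℝ} {t : ℝ} (hz : HasDerivWithinAt z d s t) :
    HasDerivWithinAt (fun τ => P.mulVec (z τ) ⬝ᵥ z τ)
      (P.mulVec d ⬝ᵥ z t + P.mulVec (z t) ⬝ᵥ d) s t := by
  have hcomp : ∀ i, HasDerivWithinAt (fun τ => z τ i) (d i) s t :=
    fun i => hasDerivWithinAt_pi.mp hz i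
  have h : HasDerivWithinAt (fun τ => ∑ i, (∑ j, P i j * z τ j) * z τ i)
      (∑ i, ((∑ j, P i j * d j) * z t i + (∑ j, P i j * z t j) * d i)) s t := by
    refine HasDerivWithinAt.fun_sum fun i _ => ?_
    exact (HasDerivWithinAt.fun_sum fun j _ => (hcomp j).const_mul (P i j)).mul (hcomp i)
  have key : P.mulVec d ⬝ᵥ z t + P.mulVec (z t) ⬝ᵥ d
      = ∑ i, ((∑ j, P i j * d j) * z t i + (∑ j, P i j * z t j) * d i) := by
    simp [Matrix.mulVec, dotProduct, Finset.sum_add_distrib]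
  rw [key]
  exact h

private lemma expFlow_hasDerivAt' (X : Matrix (Fin n) (Fin n) ℝ) (z₀ : Fin n → ℝ) (t : ℝ) :
    HasDerivAt (fun s : ℝ => (NormedSpace.exp (s • X)).mulVec z₀)
      (X.mulVec ((NormedSpace.exp (t • X)).mulVec z₀)) t := by
  letI : SeminormedRing (Matrix (Fin n) (Fin n) ℝ) := Matrix.linftyOpSemiNormedRing
  letI : NormedRing (Matrix (Fin n) (Fin n) ℝ) := Matrix.linftyOpNormedRing
  letI : NormedAlgebra ℝ (Matrix (Fin n) (Fin n) ℝ) := Matrix.linftyOpNormedAlgebra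
  have h := hasDerivAt_exp_smul_const' (𝕂 := ℝ) X t
  let L : Matrix (Fin n) (Fin n) ℝ →ₗ[ℝ] (Fin n → ℝ) :=
    { toFun := fun M => M.mulVec z₀
      map_add' := fun M N => Matrix.add_mulVec M N z₀
      map_smul' := fun c M => by simp [Matrix.smul_mulVec] }
  have hL := (L.toContinuousLinearMap.hasFDerivAt
      (x := NormedSpace.exp (t • X))).comp_hasDerivAt t h
  have e : L.toContinuousLinearMap (X * NormedSpace.exp (t • X))
      = X.mulVec ((NormedSpace.exp (t • X)).mulVec z₀) := by
    rw [Matrix.mulVec_mulVec]; rfl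
  rw [← e]
  exact hL

private lemma key_id' (A : Matrix (Fin n) (Fin n) ℝ) (B : Matrix (Fin n) (Fin m) ℝ)
    (Q : Matrix (Fin n) (Fin n) ℝ) (R : Matrix (Fin m) (Fin m) ℝ)
    (P : Matrix (Fin n) (Fin n) ℝ)
    (hPs : Pᵀ = P) (hRs : Rᵀ = R) (hRinv : R * R⁻¹ = 1)
    (hARE : Aᵀ * P + P * A - P * B * R⁻¹ * Bᵀ * P = -Q)
    (x : Fin n → ℝ) (u : Fin m → ℝ) :
    P.mulVec (A.mulVec x + B.mulVec u) ⬝ᵥ x + P.mulVec x ⬝ᵥ (A.mulVec x + B.mulVec u)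
      = R.mulVec (u + (R⁻¹ * Bᵀ * P).mulVec x) ⬝ᵥ (u + (R⁻¹ * Bᵀ * P).mulVec x)
        - (Q.mulVec x ⬝ᵥ x + R.mulVec u ⬝ᵥ u) := by
  have hM : Aᵀ * P + P * A = -Q + P * B * R⁻¹ * Bᵀ * P := sub_eq_iff_eq_add.mp hARE
  have hsc := congrArg (fun M : Matrix (Fin n) (Fin n) ℝ => x ⬝ᵥ M.mulVec x) hM
  simp only [add_mulVec, neg_mulVec, dotProduct_add, dotProduct_neg, ← mulVec_mulVec] at hsc
  have hy : (R⁻¹ * Bᵀ * P).mulVec x = R⁻¹.mulVec (Bᵀ.mulVec (P.mulVec x)) := by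
    rw [← mulVec_mulVec, ← mulVec_mulVec]
  rw [hy]
  set px := P.mulVec x with hpx
  set w := Bᵀ.mulVec px with hw
  set y := R⁻¹.mulVec w with hyy
  have hRy : R.mulVec y = w := by rw [hyy, mulVec_mulVec, hRinv, one_mulVec]
  simp only [mulVec_add, add_dotProduct, dotProduct_add]
  rw [hRy]
  have e1 : P.mulVec (A.mulVec x) ⬝ᵥ x = A.mulVec x ⬝ᵥ px := by
    rw [dp_swap', hPs]
  have e2 : P.mulVec (B.mulVec u) ⬝ᵥ x = B.mulVec u ⬝ᵥ px := by
    rw [dp_swap', hPs]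
  have e3 : px ⬝ᵥ B.mulVec u = w ⬝ᵥ u := by
    rw [dotProduct_mulVec, ← transpose_transpose B, vecMul_transpose]
  have e4 : B.mulVec u ⬝ᵥ px = w ⬝ᵥ u := by rw [dotProduct_comm, e3]
  have e5 : R.mulVec u ⬝ᵥ y = u ⬝ᵥ w := by
    rw [dp_swap', hRs, hRy]
  have e6 : x ⬝ᵥ Aᵀ.mulVec px = A.mulVec x ⬝ᵥ px := by
    rw [dotProduct_mulVec, vecMul_transpose]
  have e7 : x ⬝ᵥ P.mulVec (A.mulVec x) = px ⬝ᵥ A.mulVec x := by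
    rw [dotProduct_mulVec, ← transpose_transpose P, vecMul_transpose, hPs]
  have e8 : x ⬝ᵥ P.mulVec (B.mulVec y) = w ⬝ᵥ y := by
    rw [dotProduct_mulVec, ← transpose_transpose P, vecMul_transpose, hPs, ← hpx,
      dotProduct_mulVec, ← transpose_transpose B, vecMul_transpose]
  rw [e6, e7, e8] at hsc
  have e12 : Q.mulVec x ⬝ᵥ x = x ⬝ᵥ Q.mulVec x := dotProduct_comm _ _
  rw [e1, e2, e3, e4, e5]
  rw [e12]
  linarith [hsc, dotProduct_comm w u, dotProduct_comm w y, dotProduct_comm (A.mulVec x) px]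

end Helpers

/-- the Riccati feedback solves the forward stabilization problem with optimal
value `½⟨P z₀, z₀⟩`, and this value is a lower bound for all admissible pairs.
The operator norm bound `‖exp(tA₋)‖ ≤ M e^{-νt}` (Euclidean operator norm) is expressed
through the action on vectors, with the Euclidean norm written as `√(x ⬝ᵥ x)`. -/
theorem forward_stabilization_optimal
    (n m : ℕ) (hn : 1 ≤ n) (hm : 1 ≤ m)
    (A : Matrix (Fin n) (Fin n) ℝ) (B : Matrix (Fin n) (Fin m) ℝ)
    (Q : Matrix (Fin n) (Fin n) ℝ) (hQ : Q.PosDef)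
    (R : Matrix (Fin m) (Fin m) ℝ) (hR : R.PosDef)
    (P : Matrix (Fin n) (Fin n) ℝ) (hP : P.PosDef)
    (hARE : Aᵀ * P + P * A - P * B * R⁻¹ * Bᵀ * P = -Q)
    (M ν : ℝ) (hM : 1 ≤ M) (hν : 0 < ν)
    (hstab : ∀ t : ℝ, 0 ≤ t → ∀ x : Fin n → ℝ,
      Real.sqrt ((NormedSpace.exp (t • (A - B * R⁻¹ * Bᵀ * P))).mulVec x ⬝ᵥ
          (NormedSpace.exp (t • (A - B * R⁻¹ * Bᵀ * P))).mulVec x)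
        ≤ M * Real.exp (-ν * t) * Real.sqrt (x ⬝ᵥ x))
    (z₀ : Fin n → ℝ) :
    -- (a) optimality of the feedback pair
    ((∀ t ∈ Set.Ici (0 : ℝ),
        HasDerivWithinAt (fun s => (NormedSpace.exp (s • (A - B * R⁻¹ * Bᵀ * P))).mulVec z₀)
          (A.mulVec ((NormedSpace.exp (t • (A - B * R⁻¹ * Bᵀ * P))).mulVec z₀)
            + B.mulVec (-(R⁻¹ * Bᵀ * P).mulVec
                ((NormedSpace.exp (t • (A - B * R⁻¹ * Bᵀ * P))).mulVec z₀)))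
          (Set.Ici 0) t) ∧
      (NormedSpace.exp ((0 : ℝ) • (A - B * R⁻¹ * Bᵀ * P))).mulVec z₀ = z₀ ∧
      Filter.Tendsto (fun t : ℝ => (NormedSpace.exp (t • (A - B * R⁻¹ * Bᵀ * P))).mulVec z₀)
        Filter.atTop (nhds 0) ∧
      (1 / 2) * ∫ t in Set.Ioi (0 : ℝ),
          (Q.mulVec ((NormedSpace.exp (t • (A - B * R⁻¹ * Bᵀ * P))).mulVec z₀) ⬝ᵥ
              (NormedSpace.exp (t • (A - B * R⁻¹ * Bᵀ * P))).mulVec z₀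
            + R.mulVec (-(R⁻¹ * Bᵀ * P).mulVec
                  ((NormedSpace.exp (t • (A - B * R⁻¹ * Bᵀ * P))).mulVec z₀)) ⬝ᵥ
                (-(R⁻¹ * Bᵀ * P).mulVec
                  ((NormedSpace.exp (t • (A - B * R⁻¹ * Bᵀ * P))).mulVec z₀)))
        = (1 / 2) * (P.mulVec z₀ ⬝ᵥ z₀))
    ∧
    -- (b) the optimal value is a lower bound
    (∀ z : ℝ → Fin n → ℝ, ∀ v : ℝ → Fin m → ℝ,
      (∀ t ∈ Set.Ici (0 : ℝ),
        HasDerivWithinAt z (A.mulVec (z t) + B.mulVec (v t)) (Set.Ici 0) t) →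
      ContinuousOn v (Set.Ici 0) →
      z 0 = z₀ →
      Filter.Tendsto z Filter.atTop (nhds 0) →
      IntegrableOn (fun t => Q.mulVec (z t) ⬝ᵥ z t + R.mulVec (v t) ⬝ᵥ v t) (Set.Ici 0) →
      (1 / 2) * (P.mulVec z₀ ⬝ᵥ z₀)
        ≤ (1 / 2) * ∫ t in Set.Ioi (0 : ℝ),
            (Q.mulVec (z t) ⬝ᵥ z t + R.mulVec (v t) ⬝ᵥ v t)) := by
  have hPs : Pᵀ = P := by
    rw [← Matrix.conjTranspose_eq_transpose_of_trivial]; exact hP.1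
  have hRs : Rᵀ = R := by
    rw [← Matrix.conjTranspose_eq_transpose_of_trivial]; exact hR.1
  have hRinv : R * R⁻¹ = 1 := Matrix.mul_nonsing_inv R hR.det_pos.ne'.isUnit
  set K : Matrix (Fin m) (Fin n) ℝ := R⁻¹ * Bᵀ * P with hK
  set Am : Matrix (Fin n) (Fin n) ℝ := A - B * R⁻¹ * Bᵀ * P with hAm
  have hAmVec : ∀ y : Fin n → ℝ, Am.mulVec y = A.mulVec y + B.mulVec (-(K.mulVec y)) := by
    intro y
    have hBK : B * R⁻¹ * Bᵀ * P = B * K := by rw [hK]; simp only [Matrix.mul_assoc]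
    rw [hAm, sub_mulVec, hBK, ← mulVec_mulVec, mulVec_neg, sub_eq_add_neg]
  -- derivative of the feedback trajectory
  have hderiv_zf : ∀ t : ℝ, HasDerivAt (fun s : ℝ => (NormedSpace.exp (s • Am)).mulVec z₀)
      (A.mulVec ((NormedSpace.exp (t • Am)).mulVec z₀)
        + B.mulVec (-(K.mulVec ((NormedSpace.exp (t • Am)).mulVec z₀)))) t := by
    intro t
    have h := expFlow_hasDerivAt' Am z₀ t
    rwa [hAmVec] at h
  -- the feedback trajectory tends to zero
  have hzf0 : Filter.Tendsto (fun t : ℝ => (NormedSpace.exp (t • Am)).mulVec z₀)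
      Filter.atTop (nhds 0) := by
    have hb : Filter.Tendsto (fun t : ℝ => M * Real.exp (-ν * t) * Real.sqrt (z₀ ⬝ᵥ z₀))
        Filter.atTop (nhds 0) := by
      have h1 : Filter.Tendsto (fun t : ℝ => ν * t) Filter.atTop Filter.atTop :=
        Filter.Tendsto.const_mul_atTop hν Filter.tendsto_id
      have h2 : Filter.Tendsto (fun t : ℝ => Real.exp (-(ν * t))) Filter.atTop (nhds 0) :=
        Real.tendsto_exp_neg_atTop_nhds_zero.comp h1
      have h3 := (h2.const_mul M).mul_const (Real.sqrt (z₀ ⬝ᵥ z₀))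
      simpa [neg_mul] using h3
    refine squeeze_zero_norm' ?_ hb
    filter_upwards [Filter.eventually_ge_atTop (0:ℝ)] with t ht
    have hb1 := hstab t ht z₀
    have hC : 0 ≤ M * Real.exp (-ν * t) * Real.sqrt (z₀ ⬝ᵥ z₀) := by positivity
    rw [pi_norm_le_iff_of_nonneg hC]
    intro i
    have hsq : ((NormedSpace.exp (t • Am)).mulVec z₀ i)^2
        ≤ (NormedSpace.exp (t • Am)).mulVec z₀ ⬝ᵥ (NormedSpace.exp (t • Am)).mulVec z₀ := by
      have := Finset.single_le_sum
        (f := fun j => ((NormedSpace.exp (t • Am)).mulVec z₀ j)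
          * ((NormedSpace.exp (t • Am)).mulVec z₀ j))
        (fun j _ => mul_self_nonneg _) (Finset.mem_univ i)
      simpa [dotProduct, pow_two] using this
    calc ‖(NormedSpace.exp (t • Am)).mulVec z₀ i‖
        = Real.sqrt (((NormedSpace.exp (t • Am)).mulVec z₀ i)^2) := by
          rw [Real.sqrt_sq_eq_abs, Real.norm_eq_abs]
      _ ≤ Real.sqrt ((NormedSpace.exp (t • Am)).mulVec z₀ ⬝ᵥ
            (NormedSpace.exp (t • Am)).mulVec z₀) := Real.sqrt_le_sqrt hsq
      _ ≤ M * Real.exp (-ν * t) * Real.sqrt (z₀ ⬝ᵥ z₀) := hb1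
  refine ⟨⟨fun t _ => (hderiv_zf t).hasDerivWithinAt, ?_, hzf0, ?_⟩, ?_⟩
  · rw [zero_smul, NormedSpace.exp_zero, one_mulVec]
  · -- value of the feedback cost
    have hgtend : Filter.Tendsto
        (fun t : ℝ => -(P.mulVec ((NormedSpace.exp (t • Am)).mulVec z₀) ⬝ᵥ
          (NormedSpace.exp (t • Am)).mulVec z₀)) Filter.atTop (nhds (-0)) := by
      have h := ((cont_quad' P).tendsto 0).comp hzf0
      simp only [mulVec_zero, dotProduct_zero] at h
      exact Filter.Tendsto.neg h
    have hderivg : ∀ x ∈ Set.Ici (0:ℝ), HasDerivAt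
        (fun τ : ℝ => -(P.mulVec ((NormedSpace.exp (τ • Am)).mulVec z₀) ⬝ᵥ
          (NormedSpace.exp (τ • Am)).mulVec z₀))
        (Q.mulVec ((NormedSpace.exp (x • Am)).mulVec z₀) ⬝ᵥ
            (NormedSpace.exp (x • Am)).mulVec z₀
          + R.mulVec (-(K.mulVec ((NormedSpace.exp (x • Am)).mulVec z₀))) ⬝ᵥ
            (-(K.mulVec ((NormedSpace.exp (x • Am)).mulVec z₀)))) x := by
      intro x _
      have hq := hasDeriv_quad' P (hderiv_zf x).hasDerivWithinAt (s := Set.univ)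
      rw [hasDerivWithinAt_univ] at hq
      have hkey := key_id' A B Q R P hPs hRs hRinv hARE
        ((NormedSpace.exp (x • Am)).mulVec z₀)
        (-(K.mulVec ((NormedSpace.exp (x • Am)).mulVec z₀)))
      rw [neg_add_cancel, mulVec_zero, dotProduct_zero, zero_sub] at hkey
      have h2 := hq.neg
      rw [hkey, neg_neg] at h2
      exact h2
    have hnn : ∀ x ∈ Set.Ioi (0:ℝ), 0 ≤
        Q.mulVec ((NormedSpace.exp (x • Am)).mulVec z₀) ⬝ᵥ
            (NormedSpace.exp (x • Am)).mulVec z₀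
          + R.mulVec (-(K.mulVec ((NormedSpace.exp (x • Am)).mulVec z₀))) ⬝ᵥ
            (-(K.mulVec ((NormedSpace.exp (x • Am)).mulVec z₀))) := fun x _ =>
      add_nonneg (quad_nonneg' hQ.posSemidef _) (quad_nonneg' hR.posSemidef _)
    have hval := integral_Ioi_of_hasDerivAt_of_nonneg' hderivg hnn hgtend
    rw [hval]
    rw [zero_smul, NormedSpace.exp_zero, one_mulVec]
    ring
  · -- part (b)
    intro z v hz hv hz0 hzinf hint
    have hzc : ContinuousOn z (Set.Ici 0) := fun t ht => (hz t ht).continuousWithinAt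
    have hvK : ContinuousOn (fun t => v t + K.mulVec (z t)) (Set.Ici 0) :=
      hv.add ((cont_mulVec' K).comp_continuousOn hzc)
    have hwc : ContinuousOn
        (fun t => R.mulVec (v t + K.mulVec (z t)) ⬝ᵥ (v t + K.mulVec (z t))) (Set.Ici 0) :=
      (cont_quad' R).comp_continuousOn hvK
    have hfc : ContinuousOn
        (fun t => Q.mulVec (z t) ⬝ᵥ z t + R.mulVec (v t) ⬝ᵥ v t) (Set.Ici 0) :=
      ((cont_quad' Q).comp_continuousOn hzc).add ((cont_quad' R).comp_continuousOn hv)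
    have hgzc : ContinuousOn (fun t => P.mulVec (z t) ⬝ᵥ z t) (Set.Ici 0) :=
      (cont_quad' P).comp_continuousOn hzc
    have hkey : ∀ t : ℝ,
        P.mulVec (A.mulVec (z t) + B.mulVec (v t)) ⬝ᵥ z t
          + P.mulVec (z t) ⬝ᵥ (A.mulVec (z t) + B.mulVec (v t))
        = R.mulVec (v t + K.mulVec (z t)) ⬝ᵥ (v t + K.mulVec (z t))
          - (Q.mulVec (z t) ⬝ᵥ z t + R.mulVec (v t) ⬝ᵥ v t) :=
      fun t => key_id' A B Q R P hPs hRs hRinv hARE (z t) (v t)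
    have hFTC : ∀ T : ℝ, 0 ≤ T →
        (∫ t in (0:ℝ)..T, (R.mulVec (v t + K.mulVec (z t)) ⬝ᵥ (v t + K.mulVec (z t))
          - (Q.mulVec (z t) ⬝ᵥ z t + R.mulVec (v t) ⬝ᵥ v t)))
        = P.mulVec (z T) ⬝ᵥ z T - P.mulVec (z 0) ⬝ᵥ z 0 := by
      intro T hT
      refine intervalIntegral.integral_eq_sub_of_hasDeriv_right_of_le hT
        (hgzc.mono Set.Icc_subset_Ici_self) ?_ ?_
      · intro t ht
        have hzd : HasDerivWithinAt z (A.mulVec (z t) + B.mulVec (v t)) (Set.Ioi t) t :=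
          (hz t (le_of_lt ht.1)).mono (fun x hx => le_of_lt (ht.1.trans hx))
        have hq := hasDeriv_quad' P hzd
        rw [hkey t] at hq
        exact hq
      · apply ContinuousOn.intervalIntegrable
        rw [Set.uIcc_of_le hT]
        exact (hwc.mono Set.Icc_subset_Ici_self).sub (hfc.mono Set.Icc_subset_Ici_self)
    have hineq : ∀ T : ℝ, 0 ≤ T →
        P.mulVec (z 0) ⬝ᵥ z 0 - P.mulVec (z T) ⬝ᵥ z T
        ≤ ∫ t in (0:ℝ)..T, (Q.mulVec (z t) ⬝ᵥ z t + R.mulVec (v t) ⬝ᵥ v t) := by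
      intro T hT
      have hwi : IntervalIntegrable
          (fun t => R.mulVec (v t + K.mulVec (z t)) ⬝ᵥ (v t + K.mulVec (z t)))
          volume 0 T := by
        apply ContinuousOn.intervalIntegrable
        rw [Set.uIcc_of_le hT]
        exact hwc.mono Set.Icc_subset_Ici_self
      have hfi : IntervalIntegrable
          (fun t => Q.mulVec (z t) ⬝ᵥ z t + R.mulVec (v t) ⬝ᵥ v t) volume 0 T := by
        apply ContinuousOn.intervalIntegrable
        rw [Set.uIcc_of_le hT]
        exact hfc.mono Set.Icc_subset_Ici_self
      have hsub := intervalIntegral.integral_sub hwi hfi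
      have hwint : 0 ≤ ∫ t in (0:ℝ)..T,
          R.mulVec (v t + K.mulVec (z t)) ⬝ᵥ (v t + K.mulVec (z t)) :=
        intervalIntegral.integral_nonneg hT (fun t _ => quad_nonneg' hR.posSemidef _)
      have hFT := hFTC T hT
      rw [hsub] at hFT
      linarith
    have hgz0 : Filter.Tendsto
        (fun T : ℝ => P.mulVec (z 0) ⬝ᵥ z 0 - P.mulVec (z T) ⬝ᵥ z T) Filter.atTop
        (nhds (P.mulVec (z 0) ⬝ᵥ z 0 - 0)) := by
      have h0 : Filter.Tendsto (fun T : ℝ => P.mulVec (z T) ⬝ᵥ z T) Filter.atTop (nhds 0) := by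
        have h := ((cont_quad' P).tendsto 0).comp hzinf
        simp only [mulVec_zero, dotProduct_zero] at h
        exact h
      exact tendsto_const_nhds.sub h0
    have hIf : Filter.Tendsto
        (fun T : ℝ => ∫ t in (0:ℝ)..T, (Q.mulVec (z t) ⬝ᵥ z t + R.mulVec (v t) ⬝ᵥ v t))
        Filter.atTop
        (nhds (∫ t in Set.Ioi (0:ℝ), (Q.mulVec (z t) ⬝ᵥ z t + R.mulVec (v t) ⬝ᵥ v t))) :=
      intervalIntegral_tendsto_integral_Ioi 0 (hint.mono_set Set.Ioi_subset_Ici_self) Filter.tendsto_id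
    have hfin : P.mulVec (z 0) ⬝ᵥ z 0 - 0
        ≤ ∫ t in Set.Ioi (0:ℝ), (Q.mulVec (z t) ⬝ᵥ z t + R.mulVec (v t) ⬝ᵥ v t) :=
      le_of_tendsto_of_tendsto hgz0 hIf
        (by filter_upwards [Filter.eventually_ge_atTop (0:ℝ)] with T hT using hineq T hT)
    rw [hz0] at hfin
    linarith
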